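/- Along any solution of the closed-loop unicycle dynamics under the forward motion control with x(0) ≠ g and initial alignment (cos θ(0), sin θ(0))·(g − x(0)) ≤ 0, there exists a time t* ≤ 1/k_ω such that (cos θ(t*), sin θ(t*))·(g − x(t*)) > 0, given that whenever the alignment is nonpositive the linear velocity is zero and the angular speed satisfies |ω| ≥ k_ω·π/2 while the remaining geodesic angular error to alignment is at most π/2. -/

import Mathlib

open Real Metric Set
open scoped RealInnerProductSpace

noncomputable section

abbrev E2 := EuclideanSpace ℝ (Fin 2)

/-- Unit forward direction vector of orientation `θ`. -/
def uvec (θ : ℝ) : E2 := WithLp.toLp 2 ![Real.cos θ, Real.sin θ]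

/-- Unit normal (perpendicular) vector of orientation `θ`. -/
def nvec (θ : ℝ) : E2 := WithLp.toLp 2 ![-Real.sin θ, Real.cos θ]

/-- Two-argument arctangent, `atan2 y x`. -/
def atan2 (y x : ℝ) : ℝ := Complex.arg (x + y * Complex.I)

lemma inner_uvec (t : ℝ) (w : E2) : ⟪uvec t, w⟫ = Real.cos t * w 0 + Real.sin t * w 1 := by
  simp [uvec, PiLp.inner_apply, Fin.sum_univ_two]
  ring

lemma inner_nvec (t : ℝ) (w : E2) : ⟪nvec t, w⟫ = -Real.sin t * w 0 + Real.cos t * w 1 := by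
  simp [nvec, PiLp.inner_apply, Fin.sum_univ_two]
  ring

/-- Key auxiliary lemma: a continuous real function starting in `[π/2, π]` obeying
`γ' = -kω·γ` while `γ ∈ [π/2, γ 0]`, whose cosine stays nonpositive on `[0, 1/kω]`,
yields a contradiction. -/
lemma aux_gronwall (kω T : ℝ) (hkω : 0 < kω) (hT : T = 1 / kω)
    (γ : ℝ → ℝ) (hcont : Continuous γ) (γ0 : ℝ) (hγ00 : γ 0 = γ0)
    (hγ0 : γ0 ∈ Icc (π / 2) π)
    (hd : ∀ s ∈ Icc (0:ℝ) T, γ s ∈ Icc (π / 2) γ0 → HasDerivAt γ (-(kω * γ s)) s)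
    (hcos : ∀ s ∈ Icc (0:ℝ) T, Real.cos (γ s) ≤ 0) : False := by
  have hT0 : 0 < T := by rw [hT]; positivity
  have hπ := Real.pi_pos
  -- invariant: γ stays in [π/2, γ0] on [0, T]
  have inv : ∀ s ∈ Icc (0:ℝ) T, γ s ∈ Icc (π / 2) γ0 := by
    by_contra hbad
    push_neg at hbad
    obtain ⟨s₁, hs₁, hbad₁⟩ := hbad
    set B := {s | s ∈ Icc (0:ℝ) T ∧ γ s ∉ Icc (π / 2) γ0} with hBdef
    have hBne : B.Nonempty := ⟨s₁, hs₁, hbad₁⟩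
    have hBbdd : BddBelow B := ⟨0, fun b hb => hb.1.1⟩
    set s' := sInf B with hs'def
    have hs'mem : s' ∈ Icc (0:ℝ) T := by
      constructor
      · exact le_csInf hBne fun b hb => hb.1.1
      · obtain ⟨b, hb⟩ := hBne
        exact le_trans (csInf_le hBbdd hb) hb.1.2
    have hgood : ∀ u, 0 ≤ u → u < s' → γ u ∈ Icc (π / 2) γ0 := by
      intro u hu0 hus
      by_contra hu
      exact absurd (csInf_le hBbdd ⟨⟨hu0, le_trans hus.le hs'mem.2⟩, hu⟩) (not_le.2 hus)
    have hγs' : γ s' ∈ Icc (π / 2) γ0 := by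
      rcases eq_or_lt_of_le hs'mem.1 with h0 | h0
      · rw [← h0, hγ00]; exact ⟨hγ0.1, le_refl _⟩
      · have hsub : Ico (0:ℝ) s' ⊆ γ ⁻¹' Icc (π / 2) γ0 := fun u hu => hgood u hu.1 hu.2
        have hclosed : IsClosed (γ ⁻¹' Icc (π / 2) γ0) := (isClosed_Icc).preimage hcont
        have hmem : s' ∈ closure (Ico (0:ℝ) s') := by
          rw [closure_Ico h0.ne]; exact ⟨h0.le, le_refl _⟩
        exact hclosed.closure_subset_iff.2 hsub hmem
    have hs'notB : s' ∉ B := fun h => h.2 hγs'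
    have hderiv := hd s' hs'mem hγs'
    have hneg : -(kω * γ s') < 0 := by nlinarith [hγs'.1]
    -- eventually to the right, γ decreases below γ s'
    have hslope : ∀ᶠ u in nhdsWithin s' (Ioi s'), γ u < γ s' := by
      have h1 := hasDerivAt_iff_tendsto_slope.1 hderiv
      have h2 : ∀ᶠ u in nhdsWithin s' {s'}ᶜ, slope γ s' u < 0 :=
        h1.eventually_lt_const hneg
      have h3 : nhdsWithin s' (Ioi s') ≤ nhdsWithin s' {s'}ᶜ :=
        nhdsWithin_mono _ fun u hu => ne_of_gt hu
      filter_upwards [h3 h2, self_mem_nhdsWithin] with u hu hu'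
      rw [slope_def_field] at hu
      have hden : (0:ℝ) < u - s' := sub_pos.2 hu'
      rcases div_neg_iff.1 hu with ⟨_, h⟩ | ⟨h, _⟩
      · linarith
      · linarith
    have hpos : ∀ᶠ u in nhdsWithin s' (Ioi s'), 0 < γ u := by
      have hγpos : (0:ℝ) < γ s' := lt_of_lt_of_le (by linarith) hγs'.1
      exact ((hcont.tendsto s').eventually_const_lt hγpos).filter_mono nhdsWithin_le_nhds
    have hfreq : ∃ᶠ u in nhdsWithin s' (Ioi s'), u ∈ B := by
      rw [Filter.frequently_iff]
      intro U hU
      obtain ⟨u, hu, hsub⟩ := mem_nhdsGT_iff_exists_Ioc_subset.1 hU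
      obtain ⟨b, hbB, hbu⟩ := exists_lt_of_csInf_lt hBne hu
      have hbs : s' < b :=
        lt_of_le_of_ne (csInf_le hBbdd hbB) fun h => hs'notB (h ▸ hbB)
      exact ⟨b, hsub ⟨hbs, hbu.le⟩, hbB⟩
    obtain ⟨b, hbB, hblt, hbpos⟩ := (hfreq.and_eventually (hslope.and hpos)).exists
    have hblt2 : γ b < π / 2 := by
      by_contra h
      push_neg at h
      exact hbB.2 ⟨h, le_trans hblt.le hγs'.2⟩
    have : 0 < Real.cos (γ b) :=
      Real.cos_pos_of_mem_Ioo ⟨by linarith, hblt2⟩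
    exact absurd (hcos b hbB.1) (not_le.2 this)
  -- Grönwall: γ s * exp (kω s) is constant on [0, T]
  have hψ : ∀ s ∈ Icc (0:ℝ) T,
      HasDerivWithinAt (fun u => γ u * Real.exp (kω * u)) 0 (Icc (0:ℝ) T) s := by
    intro s hs
    have h1 : HasDerivAt (fun u : ℝ => Real.exp (kω * u))
        (Real.exp (kω * s) * (kω * 1)) s := ((hasDerivAt_id s).const_mul kω).exp
    have h2 := (hd s hs (inv s hs)).mul h1
    have h3 : -(kω * γ s) * Real.exp (kω * s) + γ s * (Real.exp (kω * s) * (kω * 1)) = 0 := by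
      ring
    rw [h3] at h2
    exact h2.hasDerivWithinAt
  have hconst := Convex.norm_image_sub_le_of_norm_hasDerivWithin_le
    (C := 0) (f' := fun _ : ℝ => (0:ℝ)) hψ (fun u _ => by simp) (convex_Icc (0:ℝ) T)
    (left_mem_Icc.2 hT0.le) (right_mem_Icc.2 hT0.le)
  have heq : γ T * Real.exp (kω * T) = γ 0 * Real.exp (kω * 0) := by
    have : ‖γ T * Real.exp (kω * T) - γ 0 * Real.exp (kω * 0)‖ ≤ 0 := by
      simpa using hconst
    have := norm_le_zero_iff.1 this
    linarith [sub_eq_zero.1 this]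
  have hkT : kω * T = 1 := by rw [hT]; field_simp
  rw [hkT, mul_zero, Real.exp_zero, mul_one, hγ00] at heq
  have hγT : π / 2 ≤ γ T := (inv T (right_mem_Icc.2 hT0.le)).1
  nlinarith [Real.exp_one_gt_d9, hγ0.2, hγT, heq]

/-- Finite-time goal alignment: a misaligned unicycle becomes aligned with the
goal within `1/k_ω` seconds under the forward motion control. -/
theorem stmt_17 (g : E2) (kv kω : ℝ) (hkv : 0 < kv) (hkω : 0 < kω)
    (x : ℝ → E2) (θ : ℝ → ℝ)
    (e : ℝ → ℝ) (he : e = fun s => ⟪uvec (θ s), g - x s⟫)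
    (v : ℝ → ℝ) (hv : v = fun s => kv * max 0 (e s))
    (ω : ℝ → ℝ) (hω : ω = fun s => kω * atan2 ⟪nvec (θ s), g - x s⟫ (e s))
    (hx : ∀ s, HasDerivAt x (v s • uvec (θ s)) s)
    (hθ : ∀ s, HasDerivAt θ (ω s) s)
    (hne : x 0 ≠ g) (hmis : e 0 ≤ 0) :
    ∃ tstar : ℝ, 0 ≤ tstar ∧ tstar ≤ 1 / kω ∧ 0 < e tstar := by
  by_contra hcon
  push_neg at hcon
  set T : ℝ := 1 / kω with hTdef
  have hT0 : 0 < T := by positivity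
  have H : ∀ t ∈ Icc (0:ℝ) T, e t ≤ 0 := fun t ht => hcon t ht.1 ht.2
  have hπ := Real.pi_pos
  -- x is constant on [0, T]
  have hxc : ∀ s ∈ Icc (0:ℝ) T, x s = x 0 := by
    intro s hs
    have hbound : ∀ u ∈ Icc (0:ℝ) T, ‖v u • uvec (θ u)‖ ≤ 0 := by
      intro u hu
      have : v u = 0 := by rw [hv]; simp [max_eq_left (H u hu)]
      simp [this]
    have := Convex.norm_image_sub_le_of_norm_hasDerivWithin_le
      (f' := fun u => v u • uvec (θ u)) (fun u _ => (hx u).hasDerivWithinAt)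
      hbound (convex_Icc (0:ℝ) T) (left_mem_Icc.2 hT0.le) hs
    simp only [zero_mul] at this
    exact sub_eq_zero.1 (norm_le_zero_iff.1 this)
  set p : E2 := g - x 0 with hpdef
  have hp : p ≠ 0 := sub_ne_zero.2 (Ne.symm hne)
  set r : ℝ := ‖p‖ with hrdef
  have hr : 0 < r := norm_pos_iff.2 hp
  have hr2 : r ^ 2 = p 0 ^ 2 + p 1 ^ 2 := by
    rw [hrdef, EuclideanSpace.norm_eq, Real.sq_sqrt (by positivity)]
    simp [Fin.sum_univ_two, Real.norm_eq_abs, sq_abs]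
  set f0 : ℝ := ⟪nvec (θ 0), g - x 0⟫ with hf0def
  have he0 : e 0 = Real.cos (θ 0) * p 0 + Real.sin (θ 0) * p 1 := by
    rw [he]; exact inner_uvec _ _
  have hf0 : f0 = -Real.sin (θ 0) * p 0 + Real.cos (θ 0) * p 1 := inner_nvec _ _
  have hsq : e 0 ^ 2 + f0 ^ 2 = r ^ 2 := by
    rw [he0, hf0, hr2]
    nlinarith [Real.sin_sq_add_cos_sq (θ 0)]
  set z : ℂ := (e 0 : ℂ) + (f0 : ℂ) * Complex.I with hzdef
  have habs : ‖z‖ = r := by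
    have h1 : ‖z‖ ^ 2 = r ^ 2 := by
      rw [Complex.sq_norm, hzdef, Complex.normSq_add_mul_I]; exact hsq
    have := congrArg Real.sqrt h1
    rwa [Real.sqrt_sq (norm_nonneg z), Real.sqrt_sq hr.le] at this
  have hz : z ≠ 0 := by
    intro h
    rw [h, norm_zero] at habs
    exact hr.ne habs
  set γ0 : ℝ := atan2 f0 (e 0) with hγ0def
  have hγ0arg : γ0 = Complex.arg z := rfl
  have hcos0 : r * Real.cos γ0 = e 0 := by
    rw [hγ0arg, Complex.cos_arg hz, habs]
    field_simp [hzdef]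
    simp [hzdef]
  have hsin0 : r * Real.sin γ0 = f0 := by
    rw [hγ0arg, Complex.sin_arg, habs]
    field_simp [hzdef]
    simp [hzdef]
  have hγ0Ioc : γ0 ∈ Ioc (-π) π := Complex.arg_mem_Ioc z
  have hcosγ0 : Real.cos γ0 ≤ 0 := by nlinarith [hmis, hcos0]
  obtain ⟨γ, hγdef⟩ : ∃ γ' : ℝ → ℝ, γ' = fun s => γ0 + θ 0 - θ s := ⟨_, rfl⟩
  have hγ00 : γ 0 = γ0 := by simp [hγdef]
  have hγd : ∀ s, HasDerivAt γ (-(ω s)) s := by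
    intro s
    rw [hγdef]
    exact (hθ s).const_sub (γ0 + θ 0)
  have hθcont : Continuous θ :=
    continuous_iff_continuousAt.2 fun s => (hθ s).continuousAt
  have hγcont : Continuous γ := by
    rw [hγdef]
    exact continuous_const.sub hθcont
  -- representation of e and the normal inner product via γ on [0, T]
  have hrep : ∀ s ∈ Icc (0:ℝ) T,
      e s = r * Real.cos (γ s) ∧ ⟪nvec (θ s), g - x s⟫ = r * Real.sin (γ s) := by
    intro s hs
    have hx0 := hxc s hs
    have hγs : γ s = γ0 - (θ s - θ 0) := by simp only [hγdef]; ring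
    have hθs : θ s = θ 0 + (θ s - θ 0) := by ring
    have hces : e s = Real.cos (θ s) * p 0 + Real.sin (θ s) * p 1 := by
      rw [he]
      show ⟪uvec (θ s), g - x s⟫ = _
      rw [hx0]; exact inner_uvec _ _
    have hcfs : ⟪nvec (θ s), g - x s⟫ = -Real.sin (θ s) * p 0 + Real.cos (θ s) * p 1 := by
      rw [hx0]; exact inner_nvec _ _
    have hc0 : r * Real.cos γ0 = Real.cos (θ 0) * p 0 + Real.sin (θ 0) * p 1 := by
      rw [hcos0, he0]
    have hs0 : r * Real.sin γ0 = -Real.sin (θ 0) * p 0 + Real.cos (θ 0) * p 1 := by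
      rw [hsin0, hf0]
    have hpyth := Real.sin_sq_add_cos_sq (θ 0)
    have hp0 : p 0 = Real.cos (θ 0) * (r * Real.cos γ0) - Real.sin (θ 0) * (r * Real.sin γ0) := by
      rw [hc0, hs0]; linear_combination (-(p 0)) * hpyth
    have hp1 : p 1 = Real.sin (θ 0) * (r * Real.cos γ0) + Real.cos (θ 0) * (r * Real.sin γ0) := by
      rw [hc0, hs0]; linear_combination (-(p 1)) * hpyth
    constructor
    · rw [hces, hγs, Real.cos_sub, Real.cos_sub, Real.sin_sub, hp0, hp1]; ring
    · rw [hcfs, hγs, Real.sin_sub, Real.cos_sub, Real.sin_sub, hp0, hp1]; ring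
  -- formula for ω in terms of γ where γ s is in the principal branch
  have homega : ∀ s ∈ Icc (0:ℝ) T, γ s ∈ Ioc (-π) π → ω s = kω * γ s := by
    intro s hs hIoc
    obtain ⟨hes, hfs⟩ := hrep s hs
    rw [hω]
    show kω * atan2 ⟪nvec (θ s), g - x s⟫ (e s) = kω * γ s
    rw [hfs, hes]
    unfold atan2
    rw [show ((r * Real.cos (γ s) : ℝ) : ℂ) + ((r * Real.sin (γ s) : ℝ) : ℂ) * Complex.I
        = (r : ℂ) * (Real.cos (γ s) + Real.sin (γ s) * Complex.I) by push_cast; ring]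
    rw [Complex.arg_real_mul _ hr, Complex.ofReal_cos, Complex.ofReal_sin,
      Complex.arg_cos_add_sin_mul_I hIoc]
  -- cosine of γ is nonpositive on [0, T]
  have hcosneg : ∀ s ∈ Icc (0:ℝ) T, Real.cos (γ s) ≤ 0 := by
    intro s hs
    have h1 := (hrep s hs).1
    have h2 := H s hs
    nlinarith
  -- two cases according to the sign of γ0
  rcases le_or_gt 0 γ0 with hA | hB
  · -- γ0 ∈ [π/2, π]
    have hγ0lb : π / 2 ≤ γ0 := by
      by_contra h
      push_neg at h
      have : 0 < Real.cos γ0 := Real.cos_pos_of_mem_Ioo ⟨by linarith, h⟩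
      linarith
    refine aux_gronwall kω T hkω hTdef γ hγcont γ0 hγ00 ⟨hγ0lb, hγ0Ioc.2⟩ ?_ hcosneg
    intro s hs hmem
    have hm1 : π / 2 ≤ γ s := hmem.1
    have hm2 : γ s ≤ γ0 := hmem.2
    have hIoc : γ s ∈ Ioc (-π) π := ⟨by linarith, le_trans hm2 hγ0Ioc.2⟩
    have := hγd s
    rwa [homega s hs hIoc] at this
  · -- γ0 ∈ (-π, -π/2]; apply the lemma to -γ
    have hγ0ub : γ0 ≤ -(π / 2) := by
      by_contra h
      push_neg at h
      have : 0 < Real.cos γ0 := Real.cos_pos_of_mem_Ioo ⟨by linarith, by linarith⟩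
      linarith
    refine aux_gronwall kω T hkω hTdef (fun s => -γ s) (hγcont.neg) (-γ0)
      (by show -γ 0 = -γ0; rw [hγ00]) ⟨by linarith, by linarith [hγ0Ioc.1]⟩ ?_ ?_
    · intro s hs hmem
      have hm1 : π / 2 ≤ -γ s := hmem.1
      have hm2 : -γ s ≤ -γ0 := hmem.2
      have hIoc : γ s ∈ Ioc (-π) π :=
        ⟨lt_of_lt_of_le hγ0Ioc.1 (by linarith), by linarith⟩
      have h1 := (hγd s).neg
      have h2 : -(kω * -γ s) = -(-(ω s)) := by rw [homega s hs hIoc]; ring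
      rwa [← h2] at h1
    · intro s hs
      rw [Real.cos_neg]
      exact hcosneg s hs
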